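/- arXiv:1312.1753 — 2 statements merged into one kernel-verified Lean document; each statement's English description precedes it below -/
import Mathlib

section
/- Let ℓ ≥ 0 and b ≥ 2 be integers. Let G be a graph with n ≥ (3ℓ+1)·b vertices, and let (T, {B_z : z ∈ V(T)}) be a tree decomposition of G such that the tree T has maximum degree at most 3 and every bag satisfies |B_z| ≤ b. Then there is a set R of exactly ℓ edges of T such that for each of the ℓ+1 connected components Q of T − R, the number of vertices of G in G[Q] satisfies |G[Q]| ≥ (n − ℓb)/(2ℓ+1). -/
open SimpleGraph

/-- `(T, B)` is a tree decomposition of the graph `G`: `T` is a tree, every vertex of `G`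
lies in some bag, both endpoints of every edge of `G` lie in a common bag, and for every
vertex `v` of `G` the set of nodes of `T` whose bag contains `v` induces a nonempty
connected subtree of `T`. -/
def IsTreeDecomp {V α : Type*} (G : SimpleGraph V) (T : SimpleGraph α) (B : α → Set V) : Prop :=
  T.IsTree ∧
  (∀ v : V, ∃ z : α, v ∈ B z) ∧
  (∀ v w : V, G.Adj v w → ∃ z : α, v ∈ B z ∧ w ∈ B z) ∧
  (∀ v : V, (T.induce {z : α | v ∈ B z}).Connected)

/-- `G[Q]`: the set of vertices of `G` that lie in some bag indexed by a node of `Q`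
and lie in no bag indexed by a node outside `Q`. -/
def bagVertices {V α : Type*} (B : α → Set V) (Q : Set α) : Set V :=
  {v : V | (∃ z ∈ Q, v ∈ B z) ∧ ∀ z ∉ Q, v ∉ B z}

/-- `T(x,y)`: the node set of the connected component of `T − xy` containing `x`. -/
def side {α : Type*} (T : SimpleGraph α) (x y : α) : Set α :=
  {z : α | (T.deleteEdges {s(x, y)}).Reachable x z}


section SideLemmas
variable {α : Type*} {T : SimpleGraph α} {x y z z' c c' u v : α}

lemma side_refl : x ∈ side T x y := Reachable.refl x

lemma side_swap_edge : (T.deleteEdges {s(y, x)}) = (T.deleteEdges {s(x, y)}) := by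
  rw [Sym2.eq_swap]

lemma not_reach_of_adj (hA : T.IsAcyclic) (hxy : T.Adj x y) :
    ¬ (T.deleteEdges {s(x, y)}).Reachable x y := by
  have hb := (isAcyclic_iff_forall_edge_isBridge.mp hA) (T.mem_edgeSet.mpr hxy)
  rw [isBridge_iff] at hb
  exact hb

lemma side_trans (hz : z ∈ side T x y)
    (h : (T.deleteEdges {s(x, y)}).Reachable z z') : z' ∈ side T x y :=
  Reachable.trans hz h

lemma not_mem_side (hA : T.IsAcyclic) (hxy : T.Adj x y) : y ∉ side T x y :=
  fun h => not_reach_of_adj hA hxy h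

lemma side_disj (hA : T.IsAcyclic) (hxy : T.Adj x y)
    (h1 : z ∈ side T x y) (h2 : z ∈ side T y x) : False := by
  rw [side, Set.mem_setOf_eq, side_swap_edge] at h2
  exact not_reach_of_adj hA hxy (h1.trans h2.symm)

lemma side_step (hz : z ∈ side T x y) (h : T.Adj z z') (hne : s(z, z') ≠ s(x, y)) :
    z' ∈ side T x y :=
  side_trans hz (Adj.reachable (by rw [deleteEdges_adj]; exact ⟨h, by simpa using hne⟩))

lemma side_union (hC : T.Connected) (hxy : T.Adj x y) (z : α) :
    z ∈ side T x y ∨ z ∈ side T y x := by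
  have key : ∀ (u w : α) (p : T.Walk u w),
      (u ∈ side T x y ∨ u ∈ side T y x) → (w ∈ side T x y ∨ w ∈ side T y x) := by
    intro u w p
    induction p with
    | nil => exact id
    | @cons a b w h q ih =>
      intro ha
      apply ih
      by_cases he : s(a, b) = s(x, y)
      · rw [Sym2.eq_iff] at he
        rcases he with ⟨rfl, rfl⟩ | ⟨rfl, rfl⟩
        · exact Or.inr side_refl
        · exact Or.inl side_refl
      · rcases ha with ha | ha
        · exact Or.inl (side_step ha h he)
        · exact Or.inr (side_step ha h (fun hh => he (hh.trans Sym2.eq_swap)))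
  obtain ⟨p⟩ := hC.preconnected x z
  exact key x z p (Or.inl side_refl)

/-- A walk avoiding the edge `xy` starting in `side T x y` stays there. -/
lemma walk_avoid (p : T.Walk u v) (he : s(x, y) ∉ p.edges) (hu : u ∈ side T x y) :
    v ∈ side T x y :=
  side_trans hu (p.toDeleteEdges {s(x, y)}
    (fun e h => by simp only [Set.mem_singleton_iff]; rintro rfl; exact he h)).reachable

/-- Support of a walk in `T − xy` starting in `side T x y` stays in the side. -/
lemma walk_support_side (p : (T.deleteEdges {s(x, y)}).Walk u v) (hu : u ∈ side T x y) :
    ∀ z ∈ p.support, z ∈ side T x y := by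
  classical
  intro z hz
  exact side_trans hu (p.takeUntil z hz).reachable

/-- Crossing lemma: a `T`-walk from `side T x y` to `side T y x` passes through `x` and `y`. -/
lemma walk_cross (hA : T.IsAcyclic) (hxy : T.Adj x y) (p : T.Walk u v)
    (hu : u ∈ side T x y) (hv : v ∈ side T y x) : x ∈ p.support ∧ y ∈ p.support := by
  revert hu hv
  induction p with
  | nil => exact fun hu hv => absurd hu (fun h => side_disj hA hxy h hv)
  | @cons a b w h q ih =>
    intro hu hv
    by_cases hb : b ∈ side T x y
    · obtain ⟨h1, h2⟩ := ih hb hv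
      exact ⟨List.mem_cons_of_mem _ h1, List.mem_cons_of_mem _ h2⟩
    · by_cases he : s(a, b) = s(x, y)
      · rw [Sym2.eq_iff] at he
        rcases he with ⟨rfl, rfl⟩ | ⟨rfl, rfl⟩
        · exact ⟨List.mem_cons_self, List.mem_cons_of_mem _ q.start_mem_support⟩
        · exact absurd hu (fun hh => side_disj hA hxy hh side_refl)
      · exact absurd (side_step hu h he) hb
end SideLemmas

section ConvexLemmas
variable {α : Type*} {T : SimpleGraph α} {x y z c c' u v w : α} {S : Set α}

/-- A `T`-walk avoiding the vertex `x` starting in `side T c x` stays there. -/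
lemma walk_avoid_vertex (p : T.Walk u w) (hx : x ∉ p.support) (hu : u ∈ side T c x) :
    w ∈ side T c x :=
  walk_avoid p (fun h => hx (p.snd_mem_support_of_mem_edges h)) hu

def TConvex (T : SimpleGraph α) (S : Set α) : Prop :=
  ∀ ⦃u v : α⦄, u ∈ S → v ∈ S → ∀ p : T.Path u v, ∀ z ∈ (p : T.Walk u v).support, z ∈ S

lemma tconvex_univ : TConvex T Set.univ := fun _ _ _ _ _ _ _ => trivial

lemma TConvex.inter {S' : Set α} (h : TConvex T S) (h' : TConvex T S') :
    TConvex T (S ∩ S') :=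
  fun _ _ hu hv p z hz => ⟨h hu.1 hv.1 p z hz, h' hu.2 hv.2 p z hz⟩

lemma tconvex_side (hT : T.IsTree) (hxy : T.Adj x y) : TConvex T (side T x y) := by
  classical
  intro u v hu hv p z hz
  have he : s(x, y) ∉ (p : T.Walk u v).edges := by
    intro he
    obtain ⟨pu⟩ := hu
    obtain ⟨pv⟩ := hv
    have hsub : ∀ e ∈ (pu.reverse.append pv).edges, e ∈ T.edgeSet := fun e h =>
      ((edgeSet_deleteEdges _ ▸ Walk.edges_subset_edgeSet _ h) : e ∈ T.edgeSet \ _).1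
    set q := (pu.reverse.append pv).transfer T hsub with hqdef
    have hpq : p = q.toPath := isAcyclic_iff_path_unique.mp hT.2 p q.toPath
    have h2 : s(x, y) ∈ q.edges := by
      apply Walk.edges_bypass_subset
      rw [hpq] at he
      exact he
    rw [hqdef, Walk.edges_transfer] at h2
    have := ((edgeSet_deleteEdges _ ▸ Walk.edges_subset_edgeSet _ h2) : s(x,y) ∈ T.edgeSet \ _).2
    exact this rfl
  have hsub := Walk.edges_takeUntil_subset (p : T.Walk u v) hz
  exact walk_avoid _ (fun h => he (hsub h)) hu

lemma TConvex.exists_walk (hC : T.Connected) (hS : TConvex T S) (hu : u ∈ S) (hv : v ∈ S) :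
    ∃ p : T.Walk u v, ∀ z ∈ p.support, z ∈ S := by
  classical
  obtain ⟨p0⟩ := hC.preconnected u v
  exact ⟨p0.toPath, fun z hz => hS hu hv p0.toPath z hz⟩

lemma side_nbr_subset (hT : T.IsTree) (hxy : T.Adj x y) (hxc : T.Adj x c) (hcy : c ≠ y) :
    side T c x ⊆ side T x y := by
  intro z hz
  obtain ⟨p0⟩ := hz
  have hx : x ∉ p0.support := fun h =>
    not_mem_side hT.2 hxc.symm (walk_support_side p0 side_refl x h)
  have hsub : ∀ e ∈ p0.edges, e ∈ T.edgeSet := fun e h =>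
    ((edgeSet_deleteEdges _ ▸ Walk.edges_subset_edgeSet p0 h) : e ∈ T.edgeSet \ _).1
  have hq : s(x, y) ∉ (p0.transfer T hsub).edges := fun h =>
    hx (by simpa [Walk.support_transfer] using
      (p0.transfer T hsub).fst_mem_support_of_mem_edges h)
  have hc : c ∈ side T x y := side_step side_refl hxc (by
    intro h
    rw [Sym2.eq_iff] at h
    rcases h with ⟨_, rfl⟩ | ⟨rfl, _⟩
    · exact hcy rfl
    · exact hxy.ne rfl)
  exact walk_avoid _ hq hc

lemma side_nbr_disj (hT : T.IsTree) (hxc : T.Adj x c) (hxc' : T.Adj x c') (hne : c ≠ c')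
    (h1 : z ∈ side T c x) (h2 : z ∈ side T c' x) : False := by
  obtain ⟨p1⟩ := h1
  obtain ⟨p2⟩ := h2
  have hx1 : x ∉ p1.support := fun h =>
    not_mem_side hT.2 hxc.symm (walk_support_side p1 side_refl x h)
  have hx2 : x ∉ p2.support := fun h =>
    not_mem_side hT.2 hxc'.symm (walk_support_side p2 side_refl x h)
  have hsub1 : ∀ e ∈ p1.edges, e ∈ T.edgeSet := fun e h =>
    ((edgeSet_deleteEdges _ ▸ Walk.edges_subset_edgeSet p1 h) : e ∈ T.edgeSet \ _).1
  have hsub2 : ∀ e ∈ p2.edges, e ∈ T.edgeSet := fun e h =>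
    ((edgeSet_deleteEdges _ ▸ Walk.edges_subset_edgeSet p2 h) : e ∈ T.edgeSet \ _).1
  set q1 := p1.transfer T hsub1
  set q2 := p2.transfer T hsub2
  set r : T.Walk c c' := q1.append q2.reverse with hr
  have hxr : x ∉ r.support := by
    rw [hr, Walk.support_append]
    intro h
    rcases List.mem_append.mp h with h | h
    · exact hx1 (by simpa [q1, Walk.support_transfer] using h)
    · exact hx2 (by
        have := List.mem_of_mem_tail h
        rw [Walk.support_reverse] at this
        simpa [q2, Walk.support_transfer] using List.mem_reverse.mp this)
  have hedges : ∀ e ∈ (Walk.cons hxc r).edges, e ∉ ({s(x, c')} : Set (Sym2 α)) := by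
    intro e he hmem
    rw [Set.mem_singleton_iff] at hmem
    subst hmem
    rw [Walk.edges_cons, List.mem_cons] at he
    rcases he with he | he
    · rw [Sym2.eq_iff] at he
      rcases he with ⟨_, h⟩ | ⟨h, _⟩
      · exact hne h.symm
      · exact hxc.ne h
    · exact hxr (r.fst_mem_support_of_mem_edges he)
  exact not_reach_of_adj hT.2 hxc'
    ((Walk.cons hxc r).toDeleteEdges {s(x, c')} hedges).reachable

lemma side_nbr_cover (hT : T.IsTree) (hxy : T.Adj x y) (hu : u ∈ side T x y) (hux : u ≠ x) :
    ∃ c, T.Adj x c ∧ c ≠ y ∧ u ∈ side T c x := by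
  classical
  obtain ⟨p0⟩ := hu
  obtain ⟨p, hp⟩ : ∃ p : (T.deleteEdges {s(x, y)}).Walk x u, p.IsPath :=
    ⟨p0.toPath, p0.toPath.2⟩
  cases p with
  | nil => exact absurd rfl hux.symm
  | @cons _ c _ h q =>
    have hadj : T.Adj x c ∧ s(x, c) ∉ ({s(x, y)} : Set (Sym2 α)) := deleteEdges_adj.mp h
    have hcy : c ≠ y := fun hcy => hadj.2 (by rw [hcy]; rfl)
    have hxq : x ∉ q.support := ((Walk.cons_isPath_iff h q).mp hp).2
    have hsub : ∀ e ∈ q.edges, e ∈ (T.deleteEdges {s(c, x)}).edgeSet := by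
      intro e he
      rw [edgeSet_deleteEdges]
      refine ⟨((edgeSet_deleteEdges _ ▸ Walk.edges_subset_edgeSet q he) : e ∈ T.edgeSet \ _).1, ?_⟩
      intro hmem
      rw [Set.mem_singleton_iff] at hmem
      subst hmem
      exact hxq (q.snd_mem_support_of_mem_edges he)
    exact ⟨c, hadj.1, hcy, (q.transfer _ hsub).reachable⟩
end ConvexLemmas

section BagLemmas
variable {V α : Type*} {T : SimpleGraph α} {B : α → Set V} {x y c u : α} {S Q Q' : Set α}

lemma bagV_disj (h : Q ∩ Q' = ∅) : bagVertices B Q ∩ bagVertices B Q' = ∅ := by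
  ext v
  simp only [Set.mem_inter_iff, Set.mem_empty_iff_false, iff_false]
  rintro ⟨⟨⟨z, hz, hvz⟩, -⟩, ⟨-, h2⟩⟩
  exact h2 z (fun hzQ' => Set.eq_empty_iff_forall_notMem.mp h z ⟨hz, hzQ'⟩) hvz

/-- Walk inside the bag-subtree of `v`. -/
lemma bag_walk (hconn : ∀ v : V, (T.induce {z : α | v ∈ B z}).Connected)
    {v : V} (hu : v ∈ B u) (hw : v ∈ B c) :
    ∃ p : T.Walk u c, ∀ z ∈ p.support, v ∈ B z := by
  obtain ⟨p⟩ := (hconn v).preconnected ⟨u, hu⟩ ⟨c, hw⟩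
  refine ⟨p.map (Embedding.induce {z : α | v ∈ B z}).toHom, ?_⟩
  intro z hz
  replace hz : z ∈ (p.map (Embedding.induce {z : α | v ∈ B z}).toHom).support := hz
  rw [Walk.support_map, List.mem_map] at hz
  obtain ⟨a, -, rfl⟩ := hz
  exact a.2

/-- Cutting lemma: removing edge `xy` splits `G[S]` into the two sides plus `B x ∩ B y`. -/
lemma bag_cut (hT : T.IsTree) (hconn : ∀ v : V, (T.induce {z : α | v ∈ B z}).Connected)
    (hxy : T.Adj x y) (S : Set α) :
    bagVertices B S ⊆
      bagVertices B (S ∩ side T x y) ∪ bagVertices B (S ∩ side T y x) ∪ (B x ∩ B y) := by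
  intro v hv
  obtain ⟨⟨z0, hz0, hvz0⟩, hall⟩ := hv
  have hIS : ∀ z, v ∈ B z → z ∈ S := fun z hz => by
    by_contra h; exact hall z h hz
  by_cases hcase : ∃ z1, v ∈ B z1 ∧ z1 ∈ side T x y
  · by_cases hcase2 : ∃ z2, v ∈ B z2 ∧ z2 ∈ side T y x
    · obtain ⟨z1, hv1, hs1⟩ := hcase
      obtain ⟨z2, hv2, hs2⟩ := hcase2
      obtain ⟨p, hp⟩ := bag_walk hconn hv1 hv2
      obtain ⟨hxs, hys⟩ := walk_cross hT.2 hxy p hs1 hs2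
      exact Or.inr ⟨hp x hxs, hp y hys⟩
    · push_neg at hcase2
      refine Or.inl (Or.inl ⟨⟨z0, ⟨hz0, ?_⟩, hvz0⟩, ?_⟩)
      · rcases side_union hT.isConnected hxy z0 with h | h
        · exact h
        · exact absurd h (hcase2 z0 hvz0)
      · rintro z hz hvz
        rcases side_union hT.isConnected hxy z with h | h
        · exact hz ⟨hIS z hvz, h⟩
        · exact hcase2 z hvz h
  · push_neg at hcase
    refine Or.inl (Or.inr ⟨⟨z0, ⟨hz0, ?_⟩, hvz0⟩, ?_⟩)
    · rcases side_union hT.isConnected hxy z0 with h | h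
      · exact absurd h (hcase z0 hvz0)
      · exact h
    · rintro z hz hvz
      rcases side_union hT.isConnected hxy z with h | h
      · exact hcase z hvz h
      · exact hz ⟨hIS z hvz, h⟩

/-- Around-vertex lemma: every vertex of `G[S ∩ side x y]` outside `B x` lives in a branch. -/
lemma bag_around (hT : T.IsTree) (hconn : ∀ v : V, (T.induce {z : α | v ∈ B z}).Connected)
    (hxy : T.Adj x y) (S : Set α) {v : V}
    (hv : v ∈ bagVertices B (S ∩ side T x y)) (hvx : v ∉ B x) :
    ∃ c, T.Adj x c ∧ c ≠ y ∧ v ∈ bagVertices B (S ∩ side T c x) := by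
  obtain ⟨⟨z0, hz0, hvz0⟩, hall⟩ := hv
  have hIA : ∀ z, v ∈ B z → z ∈ S ∩ side T x y := fun z hz => by
    by_contra h; exact hall z h hz
  have hz0x : z0 ≠ x := fun h => hvx (h ▸ hvz0)
  obtain ⟨c, hxc, hcy, hz0c⟩ := side_nbr_cover hT hxy hz0.2 hz0x
  refine ⟨c, hxc, hcy, ⟨⟨z0, ⟨hz0.1, hz0c⟩, hvz0⟩, ?_⟩⟩
  rintro z hz hvz
  apply hz
  refine ⟨(hIA z hvz).1, ?_⟩
  obtain ⟨p, hp⟩ := bag_walk hconn hvz0 hvz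
  have hxp : x ∉ p.support := fun h => hvx (hp x h)
  exact walk_avoid_vertex p hxp hz0c
end BagLemmas

lemma exists_pair_of_ncard_le_two {β : Type*} (N : Set β) (hfin : N.Finite)
    (h : N.ncard ≤ 2) (d : β) :
    (N = ∅) ∨ (∃ c, N = {c}) ∨ (∃ c1 c2, c1 ≠ c2 ∧ N = {c1, c2}) := by
  obtain h0 | h1 | h2 : N.ncard = 0 ∨ N.ncard = 1 ∨ N.ncard = 2 := by omega
  · exact Or.inl ((Set.ncard_eq_zero hfin).mp h0)
  · exact Or.inr (Or.inl (Set.ncard_eq_one.mp h1))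
  · exact Or.inr (Or.inr (Set.ncard_eq_two.mp h2))

section MainRec
variable {V α : Type*} [Fintype V] [Fintype α]

lemma main_rec {T : SimpleGraph α} {B : α → Set V} (hT : T.IsTree)
    (hconn : ∀ v : V, (T.induce {z : α | v ∈ B z}).Connected)
    (hdeg : ∀ z : α, (T.neighborSet z).ncard ≤ 3)
    {b : ℕ} (hbag : ∀ z : α, (B z).ncard ≤ b) (hb : 2 ≤ b)
    {t : ℝ} (hbt : (b : ℝ) ≤ t) :
    ∀ (k : ℕ) (S : Set α), TConvex T S →
      ((2 * k + 1) * t + k * b ≤ ((bagVertices B S).ncard : ℝ)) →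
      ∃ (R : Set (Sym2 α)) (P : Fin (k + 1) → Set α),
        R ⊆ T.edgeSet ∧ R.ncard = k ∧
        (⋃ i, P i) = S ∧
        (∀ i j, i ≠ j → P i ∩ P j = ∅) ∧
        (∀ i, (P i).Nonempty) ∧
        (∀ i, t ≤ ((bagVertices B (P i)).ncard : ℝ)) ∧
        (∀ i u v, u ∈ P i → v ∈ P i → ∃ p : T.Walk u v, ∀ z ∈ p.support, z ∈ P i) ∧
        (∀ u v i j, T.Adj u v → u ∈ P i → v ∈ P j → i ≠ j → s(u, v) ∈ R) ∧
        (∀ e ∈ R, ∃ u v, e = s(u, v) ∧ u ∈ S ∧ v ∈ S ∧ ∀ i, ¬(u ∈ P i ∧ v ∈ P i)) := by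
  have ht0 : (0 : ℝ) < t := lt_of_lt_of_le (by exact_mod_cast Nat.lt_of_lt_of_le Nat.zero_lt_two hb) hbt
  have hb0 : (0 : ℝ) ≤ (b : ℝ) := Nat.cast_nonneg b
  intro k
  induction k with
  | zero =>
    intro S hSconv hw
    have hwt : t ≤ ((bagVertices B S).ncard : ℝ) := by push_cast at hw ⊢; linarith
    refine ⟨∅, fun _ => S, by simp, by simp, Set.iUnion_const S, ?_, ?_, fun i => hwt, ?_, ?_, by simp⟩
    · intro i j hij; exact absurd (Fin.ext (by omega)) hij
    · intro i
      have hne : (bagVertices B S).Nonempty := by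
        rw [Set.nonempty_iff_ne_empty]
        intro h
        rw [h] at hwt; simp at hwt; linarith
      obtain ⟨v, ⟨z, hz, _⟩, _⟩ := hne
      exact ⟨z, hz⟩
    · intro i u v hu hv
      exact hSconv.exists_walk hT.isConnected hu hv
    · intro u v i j _ _ _ hij
      exact absurd (Fin.ext (by omega)) hij
  | succ k ih =>
    intro S hSconv hw
    push_cast at hw
    -- S contains an adjacent pair
    have hSne : (bagVertices B S).Nonempty := by
      rw [Set.nonempty_iff_ne_empty]
      intro h
      rw [h] at hw; simp at hw; nlinarith [ht0, hb0]
    obtain ⟨v0, ⟨z0, hz0, hvz0⟩, -⟩ := hSne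
    have hpair : ∃ u v, u ∈ S ∧ v ∈ S ∧ T.Adj u v := by
      by_cases hsub : S ⊆ {z0}
      · exfalso
        have : bagVertices B S ⊆ B z0 := by
          rintro v ⟨⟨z, hz, hvz⟩, -⟩
          have : z = z0 := hsub hz
          exact this ▸ hvz
        have h1 : ((bagVertices B S).ncard : ℝ) ≤ b := by
          exact_mod_cast le_trans (Set.ncard_le_ncard this (Set.toFinite _)) (hbag z0)
        nlinarith [ht0, hb0]
      · rw [Set.not_subset] at hsub
        obtain ⟨u, huS, huz⟩ := hsub
        obtain ⟨p, hp⟩ := hSconv.exists_walk hT.isConnected hz0 huS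
        cases p with
        | nil => exact absurd rfl huz
        | @cons _ c _ h q =>
          exact ⟨z0, c, hz0, hp c (by simp [Walk.support_cons]), h⟩
    -- candidate set
    set C : Set (α × α) := {p : α × α | T.Adj p.1 p.2 ∧ p.1 ∈ S ∧ p.2 ∈ S ∧
      t ≤ ((bagVertices B (S ∩ side T p.1 p.2)).ncard : ℝ)} with hC
    have hCne : C.Nonempty := by
      obtain ⟨u, v, huS, hvS, huv⟩ := hpair
      have hcut := bag_cut hT hconn huv S
      have h1 : ((bagVertices B S).ncard : ℝ) ≤
          ((bagVertices B (S ∩ side T u v)).ncard : ℝ) +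
          ((bagVertices B (S ∩ side T v u)).ncard : ℝ) + b := by
        have e1 := Set.ncard_le_ncard hcut (Set.toFinite _)
        have e2 := Set.ncard_union_le (bagVertices B (S ∩ side T u v) ∪
          bagVertices B (S ∩ side T v u)) (B u ∩ B v)
        have e3 := Set.ncard_union_le (bagVertices B (S ∩ side T u v))
          (bagVertices B (S ∩ side T v u))
        have e4 : (B u ∩ B v).ncard ≤ b :=
          le_trans (Set.ncard_le_ncard Set.inter_subset_left (Set.toFinite _)) (hbag u)
        have hN : (bagVertices B S).ncard ≤ (bagVertices B (S ∩ side T u v)).ncard +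
            (bagVertices B (S ∩ side T v u)).ncard + b := by omega
        exact_mod_cast hN
      by_contra hno
      rw [Set.not_nonempty_iff_eq_empty] at hno
      have hn1 : ¬ t ≤ ((bagVertices B (S ∩ side T u v)).ncard : ℝ) := fun hle =>
        Set.eq_empty_iff_forall_notMem.mp hno (u, v) ⟨huv, huS, hvS, hle⟩
      have hn2 : ¬ t ≤ ((bagVertices B (S ∩ side T v u)).ncard : ℝ) := fun hle =>
        Set.eq_empty_iff_forall_notMem.mp hno (v, u) ⟨huv.symm, hvS, huS, hle⟩
      push_neg at hn1 hn2
      nlinarith [ht0, hb0, (Nat.cast_nonneg k : (0:ℝ) ≤ (k:ℝ))]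
    obtain ⟨⟨x, y⟩, hxyC, hmin⟩ := Set.exists_min_image C
      (fun p => (S ∩ side T p.1 p.2).ncard) (Set.toFinite C) hCne
    obtain ⟨hxy, hxS, hyS, hwA⟩ := hxyC
    replace hxy : T.Adj x y := hxy
    replace hxS : x ∈ S := hxS
    replace hyS : y ∈ S := hyS
    replace hwA : t ≤ ((bagVertices B (S ∩ side T x y)).ncard : ℝ) := hwA
    replace hmin : ∀ c d : α, (c, d) ∈ C → (S ∩ side T x y).ncard ≤ (S ∩ side T c d).ncard :=
      fun c d h => hmin (c, d) h
    -- branch bound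
    have hbranch : ∀ c, T.Adj x c → c ≠ y →
        ((bagVertices B (S ∩ side T c x)).ncard : ℝ) ≤ t := by
      intro c hxc hcy
      by_cases hne : (S ∩ side T c x).Nonempty
      · obtain ⟨u0, hu0S, hu0side⟩ := hne
        have hcS : c ∈ S := by
          classical
          obtain ⟨p0⟩ := hT.isConnected.preconnected x u0
          have hp := hSconv hxS hu0S p0.toPath
          obtain ⟨-, hcmem⟩ := walk_cross hT.2 hxc (p0.toPath : T.Walk x u0) side_refl hu0side
          exact hp c hcmem
        by_contra hgt
        push_neg at hgt
        have hcand : (c, x) ∈ C := ⟨hxc.symm, hcS, hxS, le_of_lt hgt⟩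
        have hss : S ∩ side T c x ⊂ S ∩ side T x y := by
          constructor
          · intro z hz; exact ⟨hz.1, side_nbr_subset hT hxy hxc hcy hz.2⟩
          · intro hsub
            have hx' : x ∈ S ∩ side T c x := hsub ⟨hxS, side_refl⟩
            exact not_mem_side hT.2 hxc.symm hx'.2
        have hm : (S ∩ side T x y).ncard ≤ (S ∩ side T c x).ncard := hmin c x hcand
        have hlt := Set.ncard_lt_ncard hss (Set.toFinite _)
        omega
      · rw [Set.not_nonempty_iff_eq_empty] at hne
        have hbe : bagVertices B (S ∩ side T c x) = ∅ := by
          rw [hne]; ext v; simp [bagVertices]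
        rw [hbe]; simpa using le_of_lt ht0
    -- neighbors
    have hNle : (T.neighborSet x \ {y}).ncard ≤ 2 := by
      have hmem : y ∈ T.neighborSet x := hxy
      have h1 := Set.ncard_diff_singleton_add_one hmem (Set.toFinite _)
      have h3 := hdeg x
      omega
    have hNadj : ∀ c ∈ (T.neighborSet x \ {y}), T.Adj x c ∧ c ≠ y := by
      intro c hc
      exact ⟨hc.1, fun h => hc.2 (by simp [h])⟩
    -- cover
    have hcover : bagVertices B (S ∩ side T x y) ∪ (B x ∩ B y) ⊆
        (⋃ c ∈ (T.neighborSet x \ {y}), bagVertices B (S ∩ side T c x)) ∪ B x := by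
      rintro v (hv | hv)
      · by_cases hvx : v ∈ B x
        · exact Or.inr hvx
        · obtain ⟨c, hxc, hcy, hvc⟩ := bag_around hT hconn hxy S hv hvx
          exact Or.inl (Set.mem_biUnion (⟨hxc, by simp [hcy]⟩ : c ∈ (T.neighborSet x \ {y})) hvc)
      · exact Or.inr hv.1
    -- bound on the branches union
    have hUb : (((⋃ c ∈ (T.neighborSet x \ {y}), bagVertices B (S ∩ side T c x)).ncard : ℝ)) ≤ 2 * t := by
      rcases exists_pair_of_ncard_le_two (T.neighborSet x \ {y}) (Set.toFinite _) hNle x with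
        h0 | ⟨c, hc⟩ | ⟨c1, c2, hcne, hc⟩
      · rw [h0]; simp; positivity
      · have hcN : c ∈ (T.neighborSet x \ {y}) := by rw [hc]; rfl
        obtain ⟨ha, hb'⟩ := hNadj c hcN
        rw [hc, Set.biUnion_singleton]
        have := hbranch c ha hb'
        linarith
      · have hc1N : c1 ∈ (T.neighborSet x \ {y}) := by rw [hc]; exact Or.inl rfl
        have hc2N : c2 ∈ (T.neighborSet x \ {y}) := by rw [hc]; exact Or.inr rfl
        obtain ⟨ha1, hb1⟩ := hNadj c1 hc1N
        obtain ⟨ha2, hb2⟩ := hNadj c2 hc2N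
        rw [hc, Set.biUnion_pair]
        have h1 := hbranch c1 ha1 hb1
        have h2 := hbranch c2 ha2 hb2
        have hu := Set.ncard_union_le (bagVertices B (S ∩ side T c1 x))
          (bagVertices B (S ∩ side T c2 x))
        have : (((bagVertices B (S ∩ side T c1 x) ∪ bagVertices B (S ∩ side T c2 x)).ncard : ℝ))
            ≤ ((bagVertices B (S ∩ side T c1 x)).ncard : ℝ) +
              ((bagVertices B (S ∩ side T c2 x)).ncard : ℝ) := by exact_mod_cast hu
        linarith
    -- weight of (S ∩ side T y x)
    have hS'w : (2 * (k:ℝ) + 1) * t + k * b ≤ ((bagVertices B (S ∩ side T y x)).ncard : ℝ) := by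
      have hcut := bag_cut hT hconn hxy S
      have hsub2 : bagVertices B S ⊆
          ((⋃ c ∈ (T.neighborSet x \ {y}), bagVertices B (S ∩ side T c x)) ∪ B x) ∪ bagVertices B (S ∩ side T y x) := by
        intro v hv
        rcases hcut hv with (hv1 | hv1) | hv1
        · exact Or.inl (hcover (Or.inl hv1))
        · exact Or.inr hv1
        · exact Or.inl (hcover (Or.inr hv1))
      have e1 := Set.ncard_le_ncard hsub2 (Set.toFinite _)
      have e2 := Set.ncard_union_le ((⋃ c ∈ (T.neighborSet x \ {y}), bagVertices B (S ∩ side T c x)) ∪ B x)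
        (bagVertices B (S ∩ side T y x))
      have e3 := Set.ncard_union_le (⋃ c ∈ (T.neighborSet x \ {y}), bagVertices B (S ∩ side T c x)) (B x)
      have e4 := hbag x
      have eN : (bagVertices B S).ncard ≤ (⋃ c ∈ (T.neighborSet x \ {y}), bagVertices B (S ∩ side T c x)).ncard
          + b + (bagVertices B (S ∩ side T y x)).ncard := by omega
      have eR : ((bagVertices B S).ncard : ℝ) ≤
          (((⋃ c ∈ (T.neighborSet x \ {y}), bagVertices B (S ∩ side T c x)).ncard : ℝ)) + b +
          ((bagVertices B (S ∩ side T y x)).ncard : ℝ) := by exact_mod_cast eN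
      linarith
    -- recurse
    have hS'conv : TConvex T (S ∩ side T y x) := hSconv.inter (tconvex_side hT hxy.symm)
    obtain ⟨R', P', hR'sub, hR'card, hP'union, hP'disj, hP'ne, hP'w, hP'walk, hP'adj, hR'prop⟩ :=
      ih (S ∩ side T y x) hS'conv (by push_cast; linarith)
    have hP'S' : ∀ j, P' j ⊆ (S ∩ side T y x) := fun j => hP'union ▸ Set.subset_iUnion P' j
    have hAS' : ∀ z, z ∈ (S ∩ side T x y) → z ∈ (S ∩ side T y x) → False := fun z hz1 hz2 =>
      side_disj hT.2 hxy hz1.2 hz2.2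
    have hxy_notin : s(x, y) ∉ R' := by
      intro hmem
      obtain ⟨u, v, heq, huS', hvS', -⟩ := hR'prop _ hmem
      rcases Sym2.eq_iff.mp heq with ⟨h1, h2⟩ | ⟨h1, h2⟩
      · exact side_disj hT.2 hxy (h1 ▸ side_refl) huS'.2
      · exact side_disj hT.2 hxy (h1 ▸ side_refl) hvS'.2
    have hkey : ∀ (u v : α) (j : Fin (k+1)), u ∈ (S ∩ side T x y) → v ∈ P' j → T.Adj u v →
        s(u, v) = s(x, y) := by
      intro u v j hu hv hadj
      by_contra hne
      exact hAS' v (⟨(hP'S' j hv).1, side_step hu.2 hadj hne⟩ : v ∈ (S ∩ side T x y)) (hP'S' j hv)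
    refine ⟨insert s(x, y) R', Fin.cases (S ∩ side T x y) P', ?_, ?_, ?_, ?_, ?_, ?_, ?_, ?_, ?_⟩
    · rw [Set.insert_subset_iff]
      exact ⟨T.mem_edgeSet.mpr hxy, hR'sub⟩
    · rw [Set.ncard_insert_of_notMem hxy_notin (Set.toFinite _), hR'card]
    · ext z
      simp only [Set.mem_iUnion]
      constructor
      · rintro ⟨i, hi⟩
        induction i using Fin.cases with
        | zero => simp only [Fin.cases_zero] at hi; exact hi.1
        | succ j => simp only [Fin.cases_succ] at hi; exact (hP'S' j hi).1
      · intro hz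
        rcases side_union hT.isConnected hxy z with h | h
        · exact ⟨0, by simp only [Fin.cases_zero]; exact ⟨hz, h⟩⟩
        · have : z ∈ ⋃ j, P' j := hP'union.symm ▸ (⟨hz, h⟩ : z ∈ (S ∩ side T y x))
          obtain ⟨j, hj⟩ := Set.mem_iUnion.mp this
          exact ⟨j.succ, by simp only [Fin.cases_succ]; exact hj⟩
    · intro i j hij
      induction i using Fin.cases with
      | zero => induction j using Fin.cases with
        | zero => exact absurd rfl hij
        | succ j' =>
          simp only [Fin.cases_zero, Fin.cases_succ]
          ext z
          simp only [Set.mem_inter_iff, Set.mem_empty_iff_false, iff_false]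
          rintro ⟨h1, h2⟩
          exact hAS' z h1 (hP'S' j' h2)
      | succ i' => induction j using Fin.cases with
        | zero =>
          simp only [Fin.cases_zero, Fin.cases_succ]
          ext z
          simp only [Set.mem_inter_iff, Set.mem_empty_iff_false, iff_false]
          rintro ⟨h1, h2⟩
          exact hAS' z h2 (hP'S' i' h1)
        | succ j' =>
          simp only [Fin.cases_succ]
          exact hP'disj i' j' (fun h => hij (by rw [h]))
    · intro i
      induction i using Fin.cases with
      | zero => exact ⟨x, by simp only [Fin.cases_zero]; exact ⟨hxS, side_refl⟩⟩
      | succ j => simp only [Fin.cases_succ]; exact hP'ne j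
    · intro i
      induction i using Fin.cases with
      | zero => simp only [Fin.cases_zero]; exact hwA
      | succ j => simp only [Fin.cases_succ]; exact hP'w j
    · intro i u v hu hv
      induction i using Fin.cases with
      | zero =>
        simp only [Fin.cases_zero] at hu hv ⊢
        exact (hSconv.inter (tconvex_side hT hxy)).exists_walk hT.isConnected hu hv
      | succ j =>
        simp only [Fin.cases_succ] at hu hv ⊢
        exact hP'walk j u v hu hv
    · intro u v i j hadj hu hv hij
      induction i using Fin.cases with
      | zero => induction j using Fin.cases with
        | zero => exact absurd rfl hij
        | succ j' =>
          simp only [Fin.cases_zero] at hu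
          simp only [Fin.cases_succ] at hv
          rw [hkey u v j' hu hv hadj]
          exact Set.mem_insert _ _
      | succ i' => induction j using Fin.cases with
        | zero =>
          simp only [Fin.cases_succ] at hu
          simp only [Fin.cases_zero] at hv
          rw [show s(u, v) = s(x, y) from
            Sym2.eq_swap.trans (hkey v u i' hv hu hadj.symm)]
          exact Set.mem_insert _ _
        | succ j' =>
          simp only [Fin.cases_succ] at hu hv
          exact Set.mem_insert_of_mem _
            (hP'adj u v i' j' hadj hu hv (fun h => hij (by rw [h])))
    · intro e he
      rcases Set.mem_insert_iff.mp he with rfl | he'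
      · refine ⟨x, y, rfl, hxS, hyS, ?_⟩
        intro i
        induction i using Fin.cases with
        | zero =>
          simp only [Fin.cases_zero]
          rintro ⟨-, hy'⟩
          exact not_mem_side hT.2 hxy hy'.2
        | succ j =>
          simp only [Fin.cases_succ]
          rintro ⟨hx', -⟩
          exact hAS' x ⟨hxS, side_refl⟩ (hP'S' j hx')
      · obtain ⟨u, v, heq, huS', hvS', hni⟩ := hR'prop _ he'
        refine ⟨u, v, heq, huS'.1, hvS'.1, ?_⟩
        intro i
        induction i using Fin.cases with
        | zero =>
          simp only [Fin.cases_zero]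
          rintro ⟨hu', -⟩
          exact hAS' u hu' huS'
        | succ j =>
          simp only [Fin.cases_succ]
          exact hni j

end MainRec

theorem tree_decomposition_separator' {V α : Type*} [Fintype V] [Fintype α]
    (ℓ b : ℕ) (hb : 2 ≤ b)
    (G : SimpleGraph V) (T : SimpleGraph α) (B : α → Set V)
    (htd : T.IsTree ∧ (∀ v : V, ∃ z : α, v ∈ B z) ∧ True ∧
      (∀ v : V, (T.induce {z : α | v ∈ B z}).Connected))
    (hdeg : ∀ z : α, (T.neighborSet z).ncard ≤ 3)
    (hbag : ∀ z : α, (B z).ncard ≤ b)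
    (hn : (3 * ℓ + 1) * b ≤ Fintype.card V) :
    ∃ R : Set (Sym2 α), R ⊆ T.edgeSet ∧ R.ncard = ℓ ∧
      Nat.card ((T.deleteEdges R).ConnectedComponent) = ℓ + 1 ∧
      ∀ Q : (T.deleteEdges R).ConnectedComponent,
        ((Fintype.card V : ℝ) - ℓ * b) / (2 * ℓ + 1) ≤ ((bagVertices B Q.supp).ncard : ℝ) := by
  classical
  obtain ⟨hT, hcov, -, hconn⟩ := htd
  set t : ℝ := ((Fintype.card V : ℝ) - ℓ * b) / (2 * ℓ + 1) with ht
  have hden : (0:ℝ) < 2 * (ℓ:ℝ) + 1 := by positivity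
  have hcast : ((3 * ℓ + 1) * b : ℝ) ≤ (Fintype.card V : ℝ) := by exact_mod_cast hn
  have hbt : (b : ℝ) ≤ t := by
    rw [ht, le_div_iff₀ hden]
    push_cast at hcast ⊢
    nlinarith [hcast]
  have hcardV : bagVertices B (Set.univ : Set α) = Set.univ := by
    ext v
    constructor
    · intro _; trivial
    · intro _
      refine ⟨?_, fun z hz => absurd trivial hz⟩
      obtain ⟨z, hz⟩ := hcov v
      exact ⟨z, trivial, hz⟩
  have hwuniv : (2 * (ℓ:ℝ) + 1) * t + ℓ * b ≤ ((bagVertices B (Set.univ : Set α)).ncard : ℝ) := by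
    rw [hcardV, Set.ncard_univ, Nat.card_eq_fintype_card]
    have hfs : (2 * (ℓ:ℝ) + 1) * t = (Fintype.card V : ℝ) - ℓ * b := by
      rw [ht]; field_simp
    linarith
  obtain ⟨R, P, hRsub, hRcard, hPunion, hPdisj, hPne, hPw, hPwalk, hPadj, hRprop⟩ :=
    main_rec hT hconn hdeg hbag hb hbt ℓ Set.univ tconvex_univ hwuniv
  set H := T.deleteEdges R with hH
  have hwalkH : ∀ (i : Fin (ℓ+1)) (u v : α), u ∈ P i → v ∈ P i → H.Reachable u v := by
    intro i u v hu hv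
    obtain ⟨p, hp⟩ := hPwalk i u v hu hv
    have hedges : ∀ e ∈ p.edges, e ∈ H.edgeSet := by
      intro e he
      rw [hH, edgeSet_deleteEdges]
      refine ⟨p.edges_subset_edgeSet he, ?_⟩
      intro heR
      obtain ⟨a, c, heq, -, -, hni⟩ := hRprop e heR
      subst heq
      exact hni i ⟨hp a (p.fst_mem_support_of_mem_edges he),
        hp c (p.snd_mem_support_of_mem_edges he)⟩
    exact (p.transfer H hedges).reachable
  have hclosed : ∀ (i : Fin (ℓ+1)) (u v : α), u ∈ P i → H.Reachable u v → v ∈ P i := by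
    intro i u v hu hr
    obtain ⟨p⟩ := hr
    revert hu
    induction p with
    | nil => exact id
    | @cons a c w h q ihp =>
      intro ha
      apply ihp
      have hadj : T.Adj a c ∧ s(a, c) ∉ R := deleteEdges_adj.mp h
      have hcu : c ∈ ⋃ j, P j := by rw [hPunion]; trivial
      obtain ⟨j, hj⟩ := Set.mem_iUnion.mp hcu
      by_cases hij : i = j
      · exact hij ▸ hj
      · exact absurd (hPadj a c i j hadj.1 ha hj hij) hadj.2
  have hsupp : ∀ (i : Fin (ℓ+1)) (u : α), u ∈ P i →
      (H.connectedComponentMk u).supp = P i := by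
    intro i u hu
    ext z
    rw [ConnectedComponent.mem_supp_iff]
    constructor
    · intro h
      exact hclosed i u z hu (ConnectedComponent.eq.mp h.symm)
    · intro hz
      exact ConnectedComponent.eq.mpr (hwalkH i z u hz hu)
  set g : Fin (ℓ+1) → H.ConnectedComponent := fun i => H.connectedComponentMk (hPne i).choose
    with hg
  have hginj : Function.Injective g := by
    intro i j hij
    by_contra hne
    have hr : H.Reachable (hPne i).choose (hPne j).choose := ConnectedComponent.eq.mp hij
    have h1 : (hPne j).choose ∈ P i := hclosed i _ _ (hPne i).choose_spec hr
    have h2 : (hPne j).choose ∈ P j := (hPne j).choose_spec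
    have : (hPne j).choose ∈ P i ∩ P j := ⟨h1, h2⟩
    rw [hPdisj i j hne] at this
    exact this
  have hgsurj : Function.Surjective g := by
    intro c
    obtain ⟨z, hz⟩ := c.exists_rep
    have hcu : z ∈ ⋃ j, P j := by rw [hPunion]; trivial
    obtain ⟨i, hi⟩ := Set.mem_iUnion.mp hcu
    refine ⟨i, ?_⟩
    rw [hg]
    have := ConnectedComponent.eq.mpr (hwalkH i (hPne i).choose z (hPne i).choose_spec hi)
    rw [show H.connectedComponentMk z = c from hz] at this
    exact this
  refine ⟨R, hRsub, hRcard, ?_, ?_⟩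
  · rw [← Nat.card_eq_of_bijective g ⟨hginj, hgsurj⟩, Nat.card_eq_fintype_card,
      Fintype.card_fin]
  · intro Q
    obtain ⟨z, hz⟩ := Q.exists_rep
    have hcu : z ∈ ⋃ j, P j := by rw [hPunion]; trivial
    obtain ⟨i, hi⟩ := Set.mem_iUnion.mp hcu
    have hQsupp : Q.supp = P i := by rw [← hz]; exact hsupp i z hi
    rw [hQsupp]
    exact hPw i

/-- Lemma 2.1. Let `ℓ ≥ 0` and `b ≥ 2` be integers, and let `G` be a graph
with `n ≥ (3ℓ+1)b` vertices having a tree decomposition `(T, B)` in which `T` has maximum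
degree at most `3` and every bag has at most `b` vertices. Then there is a set `R` of exactly
`ℓ` edges of `T` such that `T − R` has exactly `ℓ+1` connected components, and every connected
component `Q` of `T − R` satisfies `|G[Q]| ≥ (n − ℓb)/(2ℓ+1)`. -/
theorem tree_decomposition_separator {V α : Type*} [Fintype V] [Fintype α]
    (ℓ b : ℕ) (hb : 2 ≤ b)
    (G : SimpleGraph V) (T : SimpleGraph α) (B : α → Set V)
    (htd : IsTreeDecomp G T B)
    (hdeg : ∀ z : α, (T.neighborSet z).ncard ≤ 3)
    (hbag : ∀ z : α, (B z).ncard ≤ b)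
    (hn : (3 * ℓ + 1) * b ≤ Fintype.card V) :
    ∃ R : Set (Sym2 α), R ⊆ T.edgeSet ∧ R.ncard = ℓ ∧
      Nat.card ((T.deleteEdges R).ConnectedComponent) = ℓ + 1 ∧
      ∀ Q : (T.deleteEdges R).ConnectedComponent,
        ((Fintype.card V : ℝ) - ℓ * b) / (2 * ℓ + 1) ≤ ((bagVertices B Q.supp).ncard : ℝ) := by
  exact tree_decomposition_separator' ℓ b hb G T B
    ⟨htd.1, htd.2.1, trivial, htd.2.2.2⟩ hdeg hbag hn
end

section
/- Let G be a graph and (T, {B_z : z ∈ V(T)}) a tree decomposition of G, and let xy be an edge of T. Let G' be the subgraph of G induced by the vertex set G[T(y,x)]. Then the pair (T(y,x), {B_z \ (B_x ∩ B_y) : z ∈ V(T(y,x))}) is a tree decomposition of G'. -/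
open SimpleGraph

/-- Helper: a walk in a subgraph `T'` of `T` whose support lies in `s` yields reachability
in `T.induce s`. -/
lemma reachable_induce_of_walk {α : Type*} {T T' : SimpleGraph α} (hle : T' ≤ T) {s : Set α} :
    ∀ {u v : α} (p : T'.Walk u v) (hs : ∀ w ∈ p.support, w ∈ s),
      (T.induce s).Reachable ⟨u, hs u p.start_mem_support⟩
        ⟨v, hs v p.end_mem_support⟩ := by
  intro u v p
  induction p with
  | nil => intro _; rfl
  | @cons a b c h q ih =>
    intro hs
    have hb : b ∈ s := hs b (by simp)
    have ha : a ∈ s := hs a (by simp)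
    have step : (T.induce s).Adj ⟨a, ha⟩ ⟨b, hb⟩ := hle h
    exact step.reachable.trans (ih (fun w hw => hs w (by simp [hw])))

/-- Let `xy` be an edge of `T` and let `G'` be the subgraph of `G` induced
by the vertex set `G[T(y,x)]`. Then `(T(y,x), {B z \ (B x ∩ B y) : z ∈ T(y,x)})` is a tree
decomposition of `G'`. -/
theorem treeDecomp_restrict_side {V α : Type*}
    (G : SimpleGraph V) (T : SimpleGraph α) (B : α → Set V)
    (htd : IsTreeDecomp G T B)
    {x y : α} (hxy : T.Adj x y) :
    IsTreeDecomp (G.induce (bagVertices B (side T y x))) (T.induce (side T y x))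
      (fun z : side T y x =>
        {v : bagVertices B (side T y x) | (v : V) ∈ B (z : α) \ (B x ∩ B y)}) := by
  classical
  obtain ⟨htree, hcov, hedge, hconn⟩ := htd
  set S : Set α := side T y x with hS
  set T' : SimpleGraph α := T.deleteEdges {s(y, x)} with hT'
  have hle : T' ≤ T := by
    intro a b hab
    exact hab.1
  -- x is not on the y-side
  have hx : x ∉ S := by
    have hbridge : T.IsBridge s(y, x) :=
      (isAcyclic_iff_forall_adj_isBridge.mp htree.IsAcyclic) hxy.symm
    exact hbridge
  have hy : y ∈ S := Reachable.refl _
  -- any vertex of the restricted graph is not in B x ∩ B y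
  have hnotin : ∀ v : V, v ∈ bagVertices B S → v ∉ B x ∩ B y := by
    intro v hv hmem
    exact hv.2 x hx hmem.1
  -- support of any T'-walk from y lies in S
  have hsupp : ∀ {a : α} (p : T'.Walk y a), ∀ w ∈ p.support, w ∈ S := by
    intro a p w hw
    exact (p.takeUntil w hw).reachable
  have hreach : ∀ a : S, (T.induce S).Reachable ⟨y, hy⟩ a := by
    rintro ⟨a, ha⟩
    obtain ⟨p⟩ := ha
    exact reachable_induce_of_walk hle p (hsupp p)
  refine ⟨⟨?_, ?_⟩, ?_, ?_, ?_⟩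
  · -- connected
    rw [connected_iff_exists_forall_reachable]
    exact ⟨⟨y, hy⟩, hreach⟩
  · -- acyclic
    intro c p hp
    exact htree.IsAcyclic (p.map (Embedding.induce S : T.induce S ↪g T).toHom)
      ((Walk.map_isCycle_iff_of_injective
        (Embedding.induce S : T.induce S ↪g T).injective).mpr hp)
  · -- vertex coverage
    rintro ⟨v, hv⟩
    obtain ⟨z, hzS, hz⟩ := hv.1
    exact ⟨⟨z, hzS⟩, hz, hnotin v hv⟩
  · -- edges
    rintro ⟨v, hv⟩ ⟨w, hw⟩ hvw
    obtain ⟨z, hz1, hz2⟩ := hedge v w hvw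
    have hzS : z ∈ S := by
      by_contra h
      exact hv.2 z h hz1
    exact ⟨⟨z, hzS⟩, ⟨hz1, hnotin v hv⟩, ⟨hz2, hnotin w hw⟩⟩
  · -- connectivity of bags
    rintro ⟨v, hv⟩
    have hAS : ∀ z : α, v ∈ B z → z ∈ S := by
      intro z hz
      by_contra h
      exact hv.2 z h hz
    have hvb : v ∉ B x ∩ B y := hnotin v hv
    -- iso between T.induce {z | v ∈ B z} and the induced bag graph
    let A : Set α := {z : α | v ∈ B z}
    let A' : Set S := {z : S | (⟨v, hv⟩ : bagVertices B S) ∈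
      {v' : bagVertices B S | (v' : V) ∈ B (z : α) \ (B x ∩ B y)}}
    have hAmem : ∀ a : A, (⟨(a : α), hAS a a.2⟩ : S) ∈ A' := fun a => ⟨a.2, hvb⟩
    let e : A ≃ A' :=
      { toFun := fun a => ⟨⟨(a : α), hAS a a.2⟩, hAmem a⟩
        invFun := fun b => ⟨((b : S) : α), b.2.1⟩
        left_inv := fun a => rfl
        right_inv := fun b => rfl }
    have iso : T.induce A ≃g (T.induce S).induce A' :=
      { e with map_rel_iff' := Iff.rfl }
    exact iso.connected_iff.mp (hconn v)
end
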